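/- Up to isomorphism, there are infinitely many tautological algebras of dimension 2n+2 for every n ≥ 1: the assignment of the structure matrix gives, via the bijection [M] ↦ [½(M+Mᵗ)] with Sp(Ω)-orbits on symmetric matrices, infinitely many isomorphism classes. -/

import Mathlib

open Matrix

/-- The standard skew-symmetric (symplectic) matrix `Ω = [[0, I], [-I, 0]]`. -/
def stdOmega (n : ℕ) : Matrix (Fin (2 * n)) (Fin (2 * n)) ℂ :=
  fun i j => if (i : ℕ) + n = (j : ℕ) then 1 else if (j : ℕ) + n = (i : ℕ) then -1 else 0

/-- `t = E_{1,2n+2}` (in 1-based indexing) in `Mat_{2n+2}(ℂ)`. -/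
def tmat (n : ℕ) : Matrix (Fin (2 * n + 2)) (Fin (2 * n + 2)) ℂ :=
  Matrix.single ⟨0, by omega⟩ ⟨2 * n + 1, by omega⟩ 1

/-- `X_i = E_{1,i+1} + Σ_l a_{li} E_{l+1,2n+2}` (1-based indexing). -/
noncomputable def Xmat (n : ℕ) (M : Matrix (Fin (2 * n)) (Fin (2 * n)) ℂ) (i : Fin (2 * n)) :
    Matrix (Fin (2 * n + 2)) (Fin (2 * n + 2)) ℂ :=
  Matrix.single ⟨0, by omega⟩ ⟨(i : ℕ) + 1, by have := i.isLt; omega⟩ 1 +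
    ∑ l : Fin (2 * n), M l i •
      Matrix.single ⟨(l : ℕ) + 1, by have := l.isLt; omega⟩ ⟨2 * n + 1, by omega⟩ 1

/-- The tautological algebra associated to a structure matrix `M`. -/
noncomputable def tautAlg (n : ℕ) (M : Matrix (Fin (2 * n)) (Fin (2 * n)) ℂ) :
    Subalgebra ℂ (Matrix (Fin (2 * n + 2)) (Fin (2 * n + 2)) ℂ) :=
  Algebra.adjoin ℂ (insert (tmat n) (Set.range (Xmat n M)))

namespace TautAux

/-- row index 0 -/
def r0 (n : ℕ) : Fin (2 * n + 2) := ⟨0, by omega⟩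
/-- column index 2n+1 -/
def cL (n : ℕ) : Fin (2 * n + 2) := ⟨2 * n + 1, by omega⟩
/-- column index i+1 -/
def cm {n : ℕ} (i : Fin (2 * n)) : Fin (2 * n + 2) := ⟨(i : ℕ) + 1, by have := i.isLt; omega⟩

variable {n : ℕ} {M : Matrix (Fin (2 * n)) (Fin (2 * n)) ℂ}

/-- `E_{0,i+1}`. -/
noncomputable def E0 (n : ℕ) (i : Fin (2 * n)) : Matrix (Fin (2 * n + 2)) (Fin (2 * n + 2)) ℂ :=
  Matrix.single (r0 n) (cm i) 1

/-- `E_{l+1,2n+1}`. -/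
noncomputable def EL (n : ℕ) (l : Fin (2 * n)) : Matrix (Fin (2 * n + 2)) (Fin (2 * n + 2)) ℂ :=
  Matrix.single (cm l) (cL n) 1

lemma tmat_eq : tmat n = Matrix.single (r0 n) (cL n) 1 := rfl

lemma Xmat_eq (i : Fin (2 * n)) : Xmat n M i = E0 n i + ∑ l : Fin (2 * n), M l i • EL n l := rfl

lemma r0_ne_cm (i : Fin (2 * n)) : r0 n ≠ cm i := by
  simp [r0, cm, Fin.ext_iff]

lemma r0_ne_cL : r0 n ≠ cL n := by
  simp [r0, cL, Fin.ext_iff]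

lemma cm_ne_cL (i : Fin (2 * n)) : cm i ≠ cL n := by
  have := i.isLt
  simp only [cm, cL, ne_eq, Fin.mk.injEq]
  omega

lemma cm_inj {i j : Fin (2 * n)} (h : cm i = cm j) : i = j := by
  simp only [cm, Fin.mk.injEq] at h
  exact Fin.ext (by omega)

lemma tmat_mul_tmat : tmat n * tmat n = 0 := by
  rw [tmat_eq]
  rw [Matrix.single_mul_single_of_ne (h := Ne.symm r0_ne_cL)]

lemma tmat_mul_Xmat (i : Fin (2 * n)) : tmat n * Xmat n M i = 0 := by
  rw [tmat_eq, Xmat_eq]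
  rw [mul_add, E0, Matrix.single_mul_single_of_ne (h := Ne.symm r0_ne_cL), Finset.mul_sum]
  rw [Finset.sum_eq_zero, add_zero]
  intro l _
  rw [EL, mul_smul_comm, Matrix.single_mul_single_of_ne (h := Ne.symm (cm_ne_cL l)), smul_zero]

lemma Xmat_mul_tmat (i : Fin (2 * n)) : Xmat n M i * tmat n = 0 := by
  rw [tmat_eq, Xmat_eq]
  rw [add_mul, E0, Matrix.single_mul_single_of_ne (h := Ne.symm (r0_ne_cm i)), Finset.sum_mul]
  rw [Finset.sum_eq_zero, add_zero]
  intro l _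
  rw [EL, smul_mul_assoc, Matrix.single_mul_single_of_ne (h := Ne.symm r0_ne_cL), smul_zero]

lemma Xmat_mul_Xmat (i j : Fin (2 * n)) :
    Xmat n M i * Xmat n M j = M i j • tmat n := by
  rw [Xmat_eq, Xmat_eq, tmat_eq]
  have h1 : E0 n i * E0 n j = 0 := by
    rw [E0, E0]
    rw [Matrix.single_mul_single_of_ne (h := Ne.symm (r0_ne_cm i))]
  have h2 : E0 n i * (∑ l : Fin (2 * n), M l j • EL n l)
      = M i j • Matrix.single (r0 n) (cL n) 1 := by
    rw [Finset.mul_sum]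
    rw [Finset.sum_eq_single i (fun l _ hl => by
        rw [E0, EL, mul_smul_comm,
          Matrix.single_mul_single_of_ne (h := fun hc => hl (cm_inj hc.symm)), smul_zero])
      (fun h => absurd (Finset.mem_univ i) h)]
    rw [E0, EL, mul_smul_comm, Matrix.single_mul_single_same, mul_one]
  have h3 : (∑ l : Fin (2 * n), M l i • EL n l) * E0 n j = 0 := by
    rw [Finset.sum_mul]
    exact Finset.sum_eq_zero (fun l _ => by
      rw [E0, EL, smul_mul_assoc, Matrix.single_mul_single_of_ne (h := Ne.symm r0_ne_cL), smul_zero])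
  have h4 : (∑ l : Fin (2 * n), M l i • EL n l) * (∑ l : Fin (2 * n), M l j • EL n l) = 0 := by
    rw [Finset.sum_mul]
    refine Finset.sum_eq_zero (fun l _ => ?_)
    rw [smul_mul_assoc, Finset.mul_sum, Finset.sum_eq_zero, smul_zero]
    intro m _
    rw [EL, EL, mul_smul_comm, Matrix.single_mul_single_of_ne (h := Ne.symm (cm_ne_cL m)), smul_zero]
  rw [add_mul, mul_add, mul_add, h1, h2, h3, h4, zero_add, add_zero, add_zero]

/-- The generic element of the tautological algebra. -/
noncomputable def elt (n : ℕ) (M : Matrix (Fin (2 * n)) (Fin (2 * n)) ℂ)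
    (a : ℂ) (c : Fin (2 * n) → ℂ) (d : ℂ) :
    Matrix (Fin (2 * n + 2)) (Fin (2 * n + 2)) ℂ :=
  a • 1 + (∑ i : Fin (2 * n), c i • Xmat n M i) + d • tmat n

lemma tmat_r0_r0 : tmat n (r0 n) (r0 n) = 0 := by
  rw [tmat_eq]
  exact Matrix.single_apply_of_ne _ _ _ _ _ (by simp [Ne.symm r0_ne_cL])

lemma tmat_r0_cm (k : Fin (2 * n)) : tmat n (r0 n) (cm k) = 0 := by
  rw [tmat_eq]
  exact Matrix.single_apply_of_ne _ _ _ _ _ (by simp [(cm_ne_cL k).symm])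

lemma tmat_r0_cL : tmat n (r0 n) (cL n) = 1 := by
  rw [tmat_eq]; exact Matrix.single_apply_same _ _ _

lemma Xmat_r0_r0 (i : Fin (2 * n)) : Xmat n M i (r0 n) (r0 n) = 0 := by
  rw [Xmat_eq, Matrix.add_apply, Matrix.sum_apply]
  rw [E0, Matrix.single_apply_of_ne _ _ _ _ _ (by simp [(r0_ne_cm i).symm])]
  rw [Finset.sum_eq_zero, add_zero]
  intro l _
  rw [EL, Matrix.smul_apply,
    Matrix.single_apply_of_ne _ _ _ _ _ (by simp [(r0_ne_cm l).symm]), smul_zero]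

lemma Xmat_r0_cm (i k : Fin (2 * n)) :
    Xmat n M i (r0 n) (cm k) = if k = i then 1 else 0 := by
  rw [Xmat_eq, Matrix.add_apply, Matrix.sum_apply]
  rw [Finset.sum_eq_zero (fun l _ => by
    rw [EL, Matrix.smul_apply,
      Matrix.single_apply_of_ne _ _ _ _ _ (by simp [(r0_ne_cm l).symm]), smul_zero]), add_zero]
  rw [E0]
  by_cases h : k = i
  · subst h
    rw [if_pos rfl]
    exact Matrix.single_apply_same _ _ _
  · rw [if_neg h]
    exact Matrix.single_apply_of_ne _ _ _ _ _ (by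
      simp only [not_and]
      intro _ hc
      exact h (cm_inj hc.symm))

lemma Xmat_r0_cL (i : Fin (2 * n)) : Xmat n M i (r0 n) (cL n) = 0 := by
  rw [Xmat_eq, Matrix.add_apply, Matrix.sum_apply]
  rw [E0, Matrix.single_apply_of_ne _ _ _ _ _ (by simp [(cm_ne_cL i)])]
  rw [Finset.sum_eq_zero, add_zero]
  intro l _
  rw [EL, Matrix.smul_apply,
    Matrix.single_apply_of_ne _ _ _ _ _ (by simp [(r0_ne_cm l).symm]), smul_zero]

lemma one_r0_r0 : (1 : Matrix (Fin (2 * n + 2)) (Fin (2 * n + 2)) ℂ) (r0 n) (r0 n) = 1 :=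
  Matrix.one_apply_eq _

lemma one_r0_cm (k : Fin (2 * n)) :
    (1 : Matrix (Fin (2 * n + 2)) (Fin (2 * n + 2)) ℂ) (r0 n) (cm k) = 0 :=
  Matrix.one_apply_ne (r0_ne_cm k)

lemma one_r0_cL : (1 : Matrix (Fin (2 * n + 2)) (Fin (2 * n + 2)) ℂ) (r0 n) (cL n) = 0 :=
  Matrix.one_apply_ne r0_ne_cL

lemma elt_r0_r0 (a : ℂ) (c : Fin (2 * n) → ℂ) (d : ℂ) :
    elt n M a c d (r0 n) (r0 n) = a := by
  rw [elt, Matrix.add_apply, Matrix.add_apply, Matrix.sum_apply, Matrix.smul_apply,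
    Matrix.smul_apply, one_r0_r0, tmat_r0_r0]
  rw [Finset.sum_eq_zero (fun i _ => by rw [Matrix.smul_apply, Xmat_r0_r0, smul_zero])]
  simp

lemma elt_r0_cm (a : ℂ) (c : Fin (2 * n) → ℂ) (d : ℂ) (k : Fin (2 * n)) :
    elt n M a c d (r0 n) (cm k) = c k := by
  rw [elt, Matrix.add_apply, Matrix.add_apply, Matrix.sum_apply, Matrix.smul_apply,
    Matrix.smul_apply, one_r0_cm, tmat_r0_cm]
  have : ∀ i ∈ Finset.univ, (c i • Xmat n M i) (r0 n) (cm k) = if k = i then c i else 0 := by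
    intro i _
    rw [Matrix.smul_apply, Xmat_r0_cm, smul_ite, smul_eq_mul, mul_one, smul_zero]
  rw [Finset.sum_congr rfl this, Finset.sum_ite_eq]
  simp

lemma elt_r0_cL (a : ℂ) (c : Fin (2 * n) → ℂ) (d : ℂ) :
    elt n M a c d (r0 n) (cL n) = d := by
  rw [elt, Matrix.add_apply, Matrix.add_apply, Matrix.sum_apply, Matrix.smul_apply,
    Matrix.smul_apply, one_r0_cL, tmat_r0_cL]
  rw [Finset.sum_eq_zero (fun i _ => by rw [Matrix.smul_apply, Xmat_r0_cL, smul_zero])]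
  simp

lemma tmat_mem : tmat n ∈ tautAlg n M :=
  Algebra.subset_adjoin (Set.mem_insert _ _)

lemma Xmat_mem (i : Fin (2 * n)) : Xmat n M i ∈ tautAlg n M :=
  Algebra.subset_adjoin (Set.mem_insert_of_mem _ ⟨i, rfl⟩)

lemma elt_mem (a : ℂ) (c : Fin (2 * n) → ℂ) (d : ℂ) : elt n M a c d ∈ tautAlg n M := by
  refine add_mem (add_mem ?_ ?_) ?_
  · exact Subalgebra.smul_mem _ (one_mem _) a
  · exact sum_mem fun i _ => Subalgebra.smul_mem _ (Xmat_mem i) _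
  · exact Subalgebra.smul_mem _ tmat_mem d

lemma elt_mul (a a' : ℂ) (c c' : Fin (2 * n) → ℂ) (d d' : ℂ) :
    elt n M a c d * elt n M a' c' d' =
      elt n M (a' * a) (fun i => a' * c i + c' i * a)
        (a' * d + d' * a + ∑ i : Fin (2 * n), ∑ j : Fin (2 * n), c' i * (c j * M j i)) := by
  unfold elt
  simp only [add_mul, mul_add, smul_mul_assoc, mul_smul_comm, one_mul, mul_one,
    Finset.sum_mul, Finset.mul_sum, tmat_mul_tmat, Xmat_mul_tmat, tmat_mul_Xmat,
    Xmat_mul_Xmat, smul_smul, smul_zero, Finset.sum_const_zero, add_zero, zero_add,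
    add_smul, Finset.sum_add_distrib, Finset.sum_smul, smul_add, Finset.smul_sum]
  abel

lemma mem_repr {x : Matrix (Fin (2 * n + 2)) (Fin (2 * n + 2)) ℂ} (hx : x ∈ tautAlg n M) :
    ∃ a c d, x = elt n M a c d := by
  have hx' : x ∈ Algebra.adjoin ℂ (insert (tmat n) (Set.range (Xmat n M))) := hx
  clear hx
  induction hx' using Algebra.adjoin_induction with
  | mem y hy =>
    rcases hy with rfl | ⟨i, rfl⟩
    · exact ⟨0, fun _ => 0, 1, by simp [elt]⟩
    · refine ⟨0, fun k => if k = i then 1 else 0, 0, ?_⟩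
      simp only [elt, zero_smul, zero_add, add_zero, ite_smul, one_smul]
      rw [Finset.sum_ite_eq' Finset.univ i (fun k => Xmat n M k)]
      simp
  | algebraMap r =>
    exact ⟨r, fun _ => 0, 0, by simp [elt, Algebra.algebraMap_eq_smul_one]⟩
  | add x y hx hy ihx ihy =>
    obtain ⟨a, c, d, rfl⟩ := ihx
    obtain ⟨a', c', d', rfl⟩ := ihy
    refine ⟨a + a', fun i => c i + c' i, d + d', ?_⟩
    unfold elt
    simp only [add_smul, Finset.sum_add_distrib]
    abel
  | mul x y hx hy ihx ihy =>
    obtain ⟨a, c, d, rfl⟩ := ihx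
    obtain ⟨a', c', d', rfl⟩ := ihy
    exact ⟨_, _, _, elt_mul a a' c c' d d'⟩

/-- The coordinate linear map. -/
noncomputable def coordMap (n : ℕ) (M : Matrix (Fin (2 * n)) (Fin (2 * n)) ℂ) :
    ↥(tautAlg n M) →ₗ[ℂ] ℂ × (Fin (2 * n) → ℂ) × ℂ where
  toFun x := ((x : Matrix (Fin (2 * n + 2)) (Fin (2 * n + 2)) ℂ) (r0 n) (r0 n),
    fun i => (x : Matrix (Fin (2 * n + 2)) (Fin (2 * n + 2)) ℂ) (r0 n) (cm i),
    (x : Matrix (Fin (2 * n + 2)) (Fin (2 * n + 2)) ℂ) (r0 n) (cL n))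
  map_add' x y := by
    simp only [Subalgebra.coe_add, Matrix.add_apply, Prod.mk_add_mk]
    rfl
  map_smul' r x := by
    simp only [SetLike.val_smul, Matrix.smul_apply, RingHom.id_apply, Prod.smul_mk]
    rfl

lemma coordMap_bijective : Function.Bijective (coordMap n M) := by
  constructor
  · intro x y hxy
    obtain ⟨a, c, d, hx⟩ := mem_repr x.2
    obtain ⟨a', c', d', hy⟩ := mem_repr y.2
    simp only [coordMap, LinearMap.coe_mk, AddHom.coe_mk, hx, hy, Prod.mk.injEq,
      elt_r0_r0, elt_r0_cm, elt_r0_cL] at hxy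
    obtain ⟨h1, h2, h3⟩ := hxy
    apply Subtype.ext
    have h2' : c = c' := h2
    rw [hx, hy, h1, h3, h2']
  · rintro ⟨a, c, d⟩
    refine ⟨⟨elt n M a c d, elt_mem a c d⟩, ?_⟩
    simp only [coordMap, LinearMap.coe_mk, AddHom.coe_mk, elt_r0_r0, elt_r0_cm, elt_r0_cL]

lemma finrank_tautAlg (n : ℕ) (M : Matrix (Fin (2 * n)) (Fin (2 * n)) ℂ) :
    Module.finrank ℂ ↥(tautAlg n M) = 2 * n + 2 := by
  rw [(LinearEquiv.ofBijective (coordMap n M) coordMap_bijective).finrank_eq]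
  rw [Module.finrank_prod, Module.finrank_prod, Module.finrank_pi, Module.finrank_self,
    Fintype.card_fin]
  omega

lemma stdOmega_mul_self (n : ℕ) : stdOmega n * stdOmega n = -1 := by
  ext i k
  rw [Matrix.mul_apply]
  by_cases hi : (i : ℕ) < n
  · rw [Finset.sum_eq_single (⟨(i : ℕ) + n, by omega⟩ : Fin (2 * n))
      (fun j _ hj => by
        have hj2 := j.isLt
        have hj3 : (j : ℕ) ≠ (i : ℕ) + n := fun hc => hj (Fin.ext hc)
        rw [stdOmega]
        rw [if_neg (by omega), if_neg (by omega), zero_mul])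
      (fun h => absurd (Finset.mem_univ _) h)]
    have hk := k.isLt
    simp only [stdOmega, Matrix.neg_apply, Matrix.one_apply, Fin.ext_iff]
    split_ifs <;> first | (exfalso; omega) | ring1
  · have hi2 := i.isLt
    rw [Finset.sum_eq_single (⟨(i : ℕ) - n, by omega⟩ : Fin (2 * n))
      (fun j _ hj => by
        have hj2 := j.isLt
        have hj3 : (j : ℕ) ≠ (i : ℕ) - n := fun hc => hj (Fin.ext hc)
        rw [stdOmega]
        rw [if_neg (by omega), if_neg (by omega), zero_mul])
      (fun h => absurd (Finset.mem_univ _) h)]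
    have hk := k.isLt
    simp only [stdOmega, Matrix.neg_apply, Matrix.one_apply, Fin.ext_iff]
    split_ifs <;> first | (exfalso; omega) | ring1

lemma det_stdOmega_ne_zero (n : ℕ) : (stdOmega n).det ≠ 0 := by
  intro h
  have h2 : (stdOmega n).det * (stdOmega n).det = 1 := by
    rw [← Matrix.det_mul, stdOmega_mul_self]
    rw [show (-1 : Matrix (Fin (2 * n)) (Fin (2 * n)) ℂ) = (-1 : ℂ) • 1 by simp]
    rw [Matrix.det_smul, Matrix.det_one, Fintype.card_fin, mul_one]
    exact Even.neg_one_pow ⟨n, by ring⟩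
  rw [h, mul_zero] at h2
  exact zero_ne_one h2

/-- The family of structure matrices. -/
def Fmat (n : ℕ) (j : ℕ) : Matrix (Fin (2 * n)) (Fin (2 * n)) ℂ :=
  Matrix.of fun i k =>
    if i = k then (if (i : ℕ) = 2 * n - 1 then (j : ℂ) else 1)
    else if (i : ℕ) + n = (k : ℕ) then 1 else 0

lemma Fmat_skew (n : ℕ) (hn : 1 ≤ n) (j : ℕ) : Fmat n j - (Fmat n j)ᵀ = stdOmega n := by
  ext i k
  simp only [Matrix.sub_apply, Matrix.transpose_apply, Fmat, Matrix.of_apply, stdOmega]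
  by_cases hik : i = k
  · subst hik
    have := i.isLt
    rw [sub_self, if_neg (by omega), if_neg (by omega)]
  · have hik2 : (i : ℕ) ≠ (k : ℕ) := fun hc => hik (Fin.ext hc)
    rw [if_neg hik, if_neg (Ne.symm hik)]
    have hi := i.isLt
    have hk := k.isLt
    by_cases h1 : (i : ℕ) + n = (k : ℕ)
    · rw [if_pos h1, if_neg (by omega), if_pos h1, sub_zero]
    · rw [if_neg h1]
      by_cases h2 : (k : ℕ) + n = (i : ℕ)
      · rw [if_pos h2, if_neg h1, if_pos h2]
        ring
      · rw [if_neg h2, if_neg h1, if_neg h2, sub_self]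

lemma Fmat_det (n : ℕ) (hn : 1 ≤ n) (j : ℕ) : (Fmat n j).det = (j : ℂ) := by
  rw [Matrix.det_of_upperTriangular (by
    intro i k hki
    have hki2 : (k : ℕ) < (i : ℕ) := hki
    simp only [Fmat, Matrix.of_apply]
    rw [if_neg (fun hc => by subst hc; omega), if_neg (by omega)])]
  have : ∀ i : Fin (2 * n), Fmat n j i i = if i = (⟨2 * n - 1, by omega⟩ : Fin (2 * n)) then
      (j : ℂ) else 1 := by
    intro i
    simp [Fmat, Fin.ext_iff]
  rw [Finset.prod_congr rfl (fun i _ => this i), Fintype.prod_ite_eq']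

lemma Fmat_zero_n (n : ℕ) (hn : 1 ≤ n) (j : ℕ) :
    Fmat n j ⟨0, by omega⟩ ⟨n, by omega⟩ = 1 := by
  simp only [Fmat, Matrix.of_apply, Fin.ext_iff]
  rw [if_neg (by omega), if_pos (by omega)]

lemma Fmat_n_zero (n : ℕ) (hn : 1 ≤ n) (j : ℕ) :
    Fmat n j ⟨n, by omega⟩ ⟨0, by omega⟩ = 0 := by
  simp only [Fmat, Matrix.of_apply, Fin.ext_iff]
  rw [if_neg (by omega), if_neg (by omega)]

end TautAux

open TautAux

/-- For every `n ≥ 1` there are infinitely many pairwise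
non-isomorphic tautological algebras of dimension `2n+2`: there is a sequence of
structure matrices `M_j` with `M_j - M_jᵗ = Ω` whose associated algebras all
have dimension `2n+2` and are pairwise non-isomorphic. -/
theorem infinitely_many_tautological_algebras (n : ℕ) (hn : 1 ≤ n) :
    ∃ F : ℕ → Matrix (Fin (2 * n)) (Fin (2 * n)) ℂ,
      (∀ j : ℕ, F j - (F j)ᵀ = stdOmega n) ∧
      (∀ j : ℕ, Module.finrank ℂ ↥(tautAlg n (F j)) = 2 * n + 2) ∧
      (∀ j₁ j₂ : ℕ, j₁ ≠ j₂ → IsEmpty (↥(tautAlg n (F j₁)) ≃ₐ[ℂ] ↥(tautAlg n (F j₂)))) := by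
  refine ⟨Fmat n, fun j => Fmat_skew n hn j, fun j => finrank_tautAlg n _, ?_⟩
  intro j₁ j₂ hne
  constructor
  intro φ
  -- the distinguished elements of the first algebra
  set xel : Fin (2 * n) → ↥(tautAlg n (Fmat n j₁)) :=
    fun i => ⟨Xmat n (Fmat n j₁) i, Xmat_mem i⟩ with hxel
  set tel : ↥(tautAlg n (Fmat n j₁)) := ⟨tmat n, tmat_mem⟩ with htel
  -- their images, in coordinates
  set Y : Fin (2 * n) → Matrix (Fin (2 * n + 2)) (Fin (2 * n + 2)) ℂ :=
    fun i => ((φ (xel i) : ↥(tautAlg n (Fmat n j₂))) :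
      Matrix (Fin (2 * n + 2)) (Fin (2 * n + 2)) ℂ) with hYdef
  have hYmem : ∀ i, Y i ∈ tautAlg n (Fmat n j₂) := fun i => (φ (xel i)).2
  choose a C d hY using fun i => mem_repr (hYmem i)
  -- the scalar coordinates of the images of nilpotents vanish
  have ha : ∀ i, a i = 0 := by
    intro i
    have hc0 : xel i * xel i * xel i = 0 := by
      apply Subtype.ext
      simp only [hxel, MulMemClass.coe_mul, ZeroMemClass.coe_zero]
      rw [Xmat_mul_Xmat, smul_mul_assoc, tmat_mul_Xmat, smul_zero]
    have h1 : Y i * Y i * Y i = 0 := by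
      have h2 := congrArg (fun z : ↥(tautAlg n (Fmat n j₂)) =>
        (z : Matrix (Fin (2 * n + 2)) (Fin (2 * n + 2)) ℂ)) (congrArg φ hc0)
      simpa only [_root_.map_mul, _root_.map_zero, MulMemClass.coe_mul, ZeroMemClass.coe_zero, hYdef] using h2
    rw [hY i, elt_mul, elt_mul] at h1
    have h2 := congrArg (fun m : Matrix (Fin (2 * n + 2)) (Fin (2 * n + 2)) ℂ =>
      m (r0 n) (r0 n)) h1
    simp only [elt_r0_r0, Matrix.zero_apply] at h2
    simpa [mul_eq_zero] using h2
  -- t is a commutator of the generators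
  have ht_eq : tmat n = Xmat n (Fmat n j₁) ⟨0, by omega⟩ * Xmat n (Fmat n j₁) ⟨n, by omega⟩ -
      Xmat n (Fmat n j₁) ⟨n, by omega⟩ * Xmat n (Fmat n j₁) ⟨0, by omega⟩ := by
    rw [Xmat_mul_Xmat, Xmat_mul_Xmat, Fmat_zero_n n hn j₁, Fmat_n_zero n hn j₁,
      one_smul, zero_smul, sub_zero]
  -- products of images of generators
  have hYY : ∀ p q, Y p * Y q =
      (∑ i : Fin (2 * n), ∑ j : Fin (2 * n), C q i * (C p j * Fmat n j₂ j i)) • tmat n := by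
    intro p q
    rw [hY p, hY q, elt_mul]
    simp [ha, elt]
  -- the image of t
  have hT : ((φ tel : ↥(tautAlg n (Fmat n j₂))) :
      Matrix (Fin (2 * n + 2)) (Fin (2 * n + 2)) ℂ) = Y ⟨0, by omega⟩ * Y ⟨n, by omega⟩ -
        Y ⟨n, by omega⟩ * Y ⟨0, by omega⟩ := by
    have h1 : tel = xel ⟨0, by omega⟩ * xel ⟨n, by omega⟩ -
        xel ⟨n, by omega⟩ * xel ⟨0, by omega⟩ := by
      apply Subtype.ext
      simp only [hxel, htel, MulMemClass.coe_mul, AddSubgroupClass.coe_sub]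
      exact ht_eq
    rw [h1, _root_.map_sub, _root_.map_mul, _root_.map_mul]
    simp only [AddSubgroupClass.coe_sub, MulMemClass.coe_mul, hYdef]
  set μ : ℂ := (∑ i : Fin (2 * n), ∑ j : Fin (2 * n),
      C ⟨n, by omega⟩ i * (C ⟨0, by omega⟩ j * Fmat n j₂ j i)) -
    (∑ i : Fin (2 * n), ∑ j : Fin (2 * n),
      C ⟨0, by omega⟩ i * (C ⟨n, by omega⟩ j * Fmat n j₂ j i)) with hμdef
  have hTμ : ((φ tel : ↥(tautAlg n (Fmat n j₂))) :
      Matrix (Fin (2 * n + 2)) (Fin (2 * n + 2)) ℂ) = μ • tmat n := by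
    rw [hT, hYY, hYY, ← sub_smul]
  -- μ is nonzero
  have hμ : μ ≠ 0 := by
    intro h0
    have h1 : φ tel = 0 := by
      apply Subtype.ext
      rw [ZeroMemClass.coe_zero, hTμ, h0, zero_smul]
    have h2 : tel = 0 := by
      have := φ.injective (h1.trans (_root_.map_zero φ).symm)
      exact this
    have h3 := congrArg (fun z : ↥(tautAlg n (Fmat n j₁)) =>
      (z : Matrix (Fin (2 * n + 2)) (Fin (2 * n + 2)) ℂ) (r0 n) (cL n)) h2
    simp only [htel, ZeroMemClass.coe_zero, Matrix.zero_apply, tmat_r0_cL] at h3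
    exact one_ne_zero h3
  -- the fundamental congruence relation, scalar form
  have hS : ∀ p q, (∑ i : Fin (2 * n), ∑ j : Fin (2 * n), C q i * (C p j * Fmat n j₂ j i)) =
      Fmat n j₁ p q * μ := by
    intro p q
    have h1 : xel p * xel q = Fmat n j₁ p q • tel := by
      apply Subtype.ext
      simp only [hxel, htel, MulMemClass.coe_mul, SetLike.val_smul]
      exact Xmat_mul_Xmat p q
    have h2 : Y p * Y q = Fmat n j₁ p q • ((φ tel : ↥(tautAlg n (Fmat n j₂))) :
        Matrix (Fin (2 * n + 2)) (Fin (2 * n + 2)) ℂ) := by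
      have hsm : φ (Fmat n j₁ p q • tel) = Fmat n j₁ p q • φ tel :=
        φ.toLinearEquiv.map_smul _ _
      have h3 := congrArg (fun z : ↥(tautAlg n (Fmat n j₂)) =>
        (z : Matrix (Fin (2 * n + 2)) (Fin (2 * n + 2)) ℂ)) (congrArg φ h1)
      simpa only [_root_.map_mul, hsm, MulMemClass.coe_mul, SetLike.val_smul, hYdef] using h3
    rw [hYY, hTμ, smul_smul] at h2
    have h4 := congrArg (fun m : Matrix (Fin (2 * n + 2)) (Fin (2 * n + 2)) ℂ =>
      m (r0 n) (cL n)) h2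
    simpa only [Matrix.smul_apply, tmat_r0_cL, smul_eq_mul, mul_one] using h4
  -- matrix form
  set Cm : Matrix (Fin (2 * n)) (Fin (2 * n)) ℂ := Matrix.of fun p i => C p i with hCm
  have hMat : Cm * Fmat n j₂ * Cmᵀ = μ • Fmat n j₁ := by
    ext p q
    have e : (Cm * Fmat n j₂ * Cmᵀ) p q =
        ∑ i : Fin (2 * n), ∑ j : Fin (2 * n), (C p j * Fmat n j₂ j i) * C q i := by
      rw [Matrix.mul_apply]
      refine Finset.sum_congr rfl fun i _ => ?_
      rw [Matrix.mul_apply, Matrix.transpose_apply, Finset.sum_mul]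
      rfl
    have e2 : (∑ i : Fin (2 * n), ∑ j : Fin (2 * n), (C p j * Fmat n j₂ j i) * C q i) =
        ∑ i : Fin (2 * n), ∑ j : Fin (2 * n), C q i * (C p j * Fmat n j₂ j i) :=
      Finset.sum_congr rfl fun i _ => Finset.sum_congr rfl fun j _ => by ring
    rw [e, e2, hS p q, Matrix.smul_apply, smul_eq_mul]
    ring
  have hMatT : Cm * (Fmat n j₂)ᵀ * Cmᵀ = μ • (Fmat n j₁)ᵀ := by
    calc Cm * (Fmat n j₂)ᵀ * Cmᵀ = (Cm * Fmat n j₂ * Cmᵀ)ᵀ := by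
          rw [Matrix.transpose_mul, Matrix.transpose_mul, Matrix.transpose_transpose,
            Matrix.mul_assoc]
      _ = (μ • Fmat n j₁)ᵀ := by rw [hMat]
      _ = μ • (Fmat n j₁)ᵀ := Matrix.transpose_smul _ _
  have hSkew : Cm * stdOmega n * Cmᵀ = μ • stdOmega n := by
    calc Cm * stdOmega n * Cmᵀ = Cm * (Fmat n j₂ - (Fmat n j₂)ᵀ) * Cmᵀ := by
          rw [Fmat_skew n hn j₂]
      _ = μ • (Fmat n j₁ - (Fmat n j₁)ᵀ) := by
          rw [Matrix.mul_sub, Matrix.sub_mul, hMat, hMatT, smul_sub]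
      _ = μ • stdOmega n := by rw [Fmat_skew n hn j₁]
  -- determinants
  have hcard : Fintype.card (Fin (2 * n)) = 2 * n := Fintype.card_fin _
  have e1 : Cm.det * (stdOmega n).det * Cm.det = μ ^ (2 * n) * (stdOmega n).det := by
    have h := congrArg Matrix.det hSkew
    rwa [Matrix.det_mul, Matrix.det_mul, Matrix.det_transpose, Matrix.det_smul, hcard] at h
  have e2 : Cm.det * (Fmat n j₂).det * Cm.det = μ ^ (2 * n) * (Fmat n j₁).det := by
    have h := congrArg Matrix.det hMat
    rwa [Matrix.det_mul, Matrix.det_mul, Matrix.det_transpose, Matrix.det_smul, hcard] at h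
  have e3 : Cm.det * Cm.det = μ ^ (2 * n) :=
    mul_right_cancel₀ (det_stdOmega_ne_zero n) (by linear_combination e1)
  have e4 : μ ^ (2 * n) * (Fmat n j₂).det = μ ^ (2 * n) * (Fmat n j₁).det := by
    linear_combination e2 - (Fmat n j₂).det * e3
  have e5 : (Fmat n j₂).det = (Fmat n j₁).det :=
    mul_left_cancel₀ (pow_ne_zero _ hμ) e4
  rw [Fmat_det n hn j₁, Fmat_det n hn j₂] at e5
  exact hne (Nat.cast_inj.mp e5).symm
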